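/- Let n be a natural number. The projection homomorphism Aut_S(A_n) → Aut(W_n), (f, F) ↦ F, is surjective, its kernel is { (f, id) : f ∈ Aut_W(A_n) } ≅ Aut_W(A_n), and it admits a group-theoretic section; that is, the short exact sequence 1 → Aut_W(A_n) → Aut_S(A_n) → Aut(W_n) → 1 splits. -/

import Mathlib

def HWrels (n : ℕ) : Set (FreeGroup (Fin n)) :=
  {r | ∃ i j : Fin n, i ≠ j ∧
    r = (FreeGroup.of i)⁻¹ * FreeGroup.of j ^ 2 * FreeGroup.of i * FreeGroup.of j ^ 2}

abbrev HW (n : ℕ) : Type := PresentedGroup (HWrels n)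

def x (n : ℕ) (i : Fin n) : HW n := PresentedGroup.of i

def A (n : ℕ) : Subgroup (HW n) := Subgroup.closure (Set.range fun i => x n i ^ 2)

theorem HW.relation (n : ℕ) {i j : Fin n} (h : i ≠ j) :
    (x n i)⁻¹ * x n j ^ 2 * x n i * x n j ^ 2 = 1 := by
  have hr : ((FreeGroup.of i)⁻¹ * FreeGroup.of j ^ 2 * FreeGroup.of i * FreeGroup.of j ^ 2)
      ∈ HWrels n := ⟨i, j, h, rfl⟩
  have h2 : PresentedGroup.mk (HWrels n)
      ((FreeGroup.of i)⁻¹ * FreeGroup.of j ^ 2 * FreeGroup.of i * FreeGroup.of j ^ 2) = 1 :=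
    (QuotientGroup.eq_one_iff _).mpr (Subgroup.subset_normalClosure hr)
  rw [map_mul, map_mul, map_mul, map_inv, map_pow] at h2
  exact h2

theorem HW.conj_sq_mem (n : ℕ) (k j : Fin n) :
    x n k * x n j ^ 2 * (x n k)⁻¹ ∈ A n ∧ (x n k)⁻¹ * x n j ^ 2 * x n k ∈ A n := by
  have hj : x n j ^ 2 ∈ A n := Subgroup.subset_closure ⟨j, rfl⟩
  by_cases h : k = j
  · subst h
    have e1 : x n k * x n k ^ 2 * (x n k)⁻¹ = x n k ^ 2 := by group
    have e2 : (x n k)⁻¹ * x n k ^ 2 * x n k = x n k ^ 2 := by group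
    rw [e1, e2]; exact ⟨hj, hj⟩
  · have hrel := HW.relation n h
    have e2 : (x n k)⁻¹ * x n j ^ 2 * x n k = (x n j ^ 2)⁻¹ :=
      mul_eq_one_iff_eq_inv.mp hrel
    have h3 : x n j ^ 2 = x n k * (x n j ^ 2)⁻¹ * (x n k)⁻¹ := by
      rw [← e2]; group
    have e1 : x n k * x n j ^ 2 * (x n k)⁻¹ = (x n j ^ 2)⁻¹ := by
      calc x n k * x n j ^ 2 * (x n k)⁻¹
          = (x n k * (x n j ^ 2)⁻¹ * (x n k)⁻¹)⁻¹ := by group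
        _ = (x n j ^ 2)⁻¹ := by rw [← h3]
    rw [e1, e2]
    exact ⟨Subgroup.inv_mem _ hj, Subgroup.inv_mem _ hj⟩

instance A_normal (n : ℕ) : (A n).Normal := by
  let K : Subgroup (HW n) :=
    { carrier := {g | (∀ a ∈ A n, g * a * g⁻¹ ∈ A n) ∧ (∀ a ∈ A n, g⁻¹ * a * g ∈ A n)}
      one_mem' := by simp
      mul_mem' := by
        rintro g h ⟨hg1, hg2⟩ ⟨hh1, hh2⟩
        constructor
        · intro a ha
          have := hg1 _ (hh1 a ha)
          have e : g * (h * a * h⁻¹) * g⁻¹ = g * h * a * (g * h)⁻¹ := by group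
          rwa [e] at this
        · intro a ha
          have := hh2 _ (hg2 a ha)
          have e : h⁻¹ * (g⁻¹ * a * g) * h = (g * h)⁻¹ * a * (g * h) := by group
          rwa [e] at this
      inv_mem' := by
        rintro g ⟨hg1, hg2⟩
        constructor
        · intro a ha
          have := hg2 a ha
          have e : g⁻¹ * a * g = g⁻¹ * a * g⁻¹⁻¹ := by group
          rwa [e] at this
        · intro a ha
          have := hg1 a ha
          have e : g * a * g⁻¹ = g⁻¹⁻¹ * a * g⁻¹ := by group
          rwa [e] at this }
  have hgen : ∀ j : Fin n, PresentedGroup.of (rels := HWrels n) j ∈ K := by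
    intro j
    show (∀ a ∈ A n, x n j * a * (x n j)⁻¹ ∈ A n) ∧ (∀ a ∈ A n, (x n j)⁻¹ * a * x n j ∈ A n)
    constructor
    · intro a ha
      refine Subgroup.closure_induction ?_ ?_ ?_ ?_ ha
      · rintro b ⟨i, rfl⟩
        exact (HW.conj_sq_mem n j i).1
      · simpa using Subgroup.one_mem (A n)
      · intro b c _ _ hb hc
        have e : x n j * (b * c) * (x n j)⁻¹
            = (x n j * b * (x n j)⁻¹) * (x n j * c * (x n j)⁻¹) := by group
        rw [e]; exact Subgroup.mul_mem _ hb hc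
      · intro b _ hb
        have e : x n j * b⁻¹ * (x n j)⁻¹ = (x n j * b * (x n j)⁻¹)⁻¹ := by group
        rw [e]; exact Subgroup.inv_mem _ hb
    · intro a ha
      refine Subgroup.closure_induction ?_ ?_ ?_ ?_ ha
      · rintro b ⟨i, rfl⟩
        exact (HW.conj_sq_mem n j i).2
      · simpa using Subgroup.one_mem (A n)
      · intro b c _ _ hb hc
        have e : (x n j)⁻¹ * (b * c) * x n j
            = ((x n j)⁻¹ * b * x n j) * ((x n j)⁻¹ * c * x n j) := by group
        rw [e]; exact Subgroup.mul_mem _ hb hc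
      · intro b _ hb
        have e : (x n j)⁻¹ * b⁻¹ * x n j = ((x n j)⁻¹ * b * x n j)⁻¹ := by group
        rw [e]; exact Subgroup.inv_mem _ hb
  constructor
  intro a ha g
  exact ((PresentedGroup.generated_by (HWrels n) K hgen g).1) a ha

theorem A_comm (n : ℕ) : ∀ a ∈ A n, ∀ b ∈ A n, Commute a b := by
  have gen : ∀ i j : Fin n, Commute (x n i ^ 2) (x n j ^ 2) := by
    intro i j
    by_cases h : i = j
    · subst h; exact Commute.refl _
    · have e2 : (x n i)⁻¹ * x n j ^ 2 * x n i = (x n j ^ 2)⁻¹ :=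
        mul_eq_one_iff_eq_inv.mp (HW.relation n h)
      have h4 : ((x n i)⁻¹ * x n j ^ 2 * x n i)⁻¹ = x n j ^ 2 := by
        rw [e2, inv_inv]
      have e2' : (x n i)⁻¹ * (x n j ^ 2)⁻¹ * x n i = x n j ^ 2 := by
        conv_rhs => rw [← h4]
        group
      have key : (x n i ^ 2)⁻¹ * x n j ^ 2 * x n i ^ 2 = x n j ^ 2 := by
        have step1 : (x n i ^ 2)⁻¹ * x n j ^ 2 * x n i ^ 2
            = (x n i)⁻¹ * ((x n i)⁻¹ * x n j ^ 2 * x n i) * x n i := by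
          rw [pow_two (x n i)]; group
        rw [step1, e2]
        exact e2'
      have comm : x n j ^ 2 * x n i ^ 2 = x n i ^ 2 * x n j ^ 2 := by
        have step2 : x n j ^ 2 * x n i ^ 2
            = x n i ^ 2 * ((x n i ^ 2)⁻¹ * x n j ^ 2 * x n i ^ 2) := by group
        rw [step2, key]
      exact Commute.symm comm
  intro a ha
  refine Subgroup.closure_induction ?_ ?_ ?_ ?_ ha
  · rintro b ⟨i, rfl⟩
    intro c hc
    have inner : ∀ d ∈ A n, Commute d (x n i ^ 2) := by
      intro d hd
      refine Subgroup.closure_induction ?_ ?_ ?_ ?_ hd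
      · rintro e ⟨j, rfl⟩; exact gen j i
      · exact Commute.one_left _
      · intro e f _ _ he hf; exact he.mul_left hf
      · intro e _ he; exact he.inv_left
    exact (inner c hc).symm
  · intro b _; exact Commute.one_left _
  · intro b c _ _ hb hc d hd; exact (hb d hd).mul_left (hc d hd)
  · intro b _ hb d hd; exact (hb d hd).inv_left

/-- The quotient `W_n = G_n / A_n`. -/
abbrev Wq (n : ℕ) : Type := HW n ⧸ A n

/-- The generators `x̄_i` of `W_n = G_n/A_n`. -/
def xq (n : ℕ) (i : Fin n) : Wq n := QuotientGroup.mk (x n i)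

/-- `x_i²` as an element of `A_n`. -/
def xsq (n : ℕ) (i : Fin n) : ↥(A n) :=
  ⟨x n i ^ 2, Subgroup.subset_closure ⟨i, rfl⟩⟩

/-- The action of `w ∈ G_n` on `A_n` by conjugation, `w · a = w a w⁻¹`
(it factors through `W_n = G_n/A_n`). -/
def conjA (n : ℕ) (g : HW n) (a : ↥(A n)) : ↥(A n) :=
  ⟨g * a * g⁻¹, (A_normal n).conj_mem a.1 a.2 g⟩

/-- A pair `(f, F) ∈ Aut(A_n) × Aut(W_n)` is semi-linear if `f(w̄ · a) = F(w̄) · f(a)`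
for all `a ∈ A_n`, `w̄ ∈ W_n`, where the `W_n`-action on `A_n` is by conjugation. -/
def IsSemilinear (n : ℕ) (p : MulAut ↥(A n) × MulAut (Wq n)) : Prop :=
  ∀ (g g' : HW n) (a : ↥(A n)),
    (QuotientGroup.mk g' : Wq n) = p.2 (QuotientGroup.mk g) →
    p.1 (conjA n g a) = conjA n g' (p.1 a)

/-- The group `Aut_S(A_n)` of semi-linear automorphisms of the `W_n`-module `A_n`. -/
def AutS (n : ℕ) : Subgroup (MulAut ↥(A n) × MulAut (Wq n)) where
  carrier := {p | IsSemilinear n p}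
  one_mem' := by
    intro g g' a h
    simp only [Prod.snd_one, MulAut.one_apply] at h
    have hb : g'⁻¹ * g ∈ A n := QuotientGroup.eq.mp h
    show conjA n g a = conjA n g' a
    apply Subtype.ext
    show g * a * g⁻¹ = g' * a * g'⁻¹
    have hcomm : Commute (g'⁻¹ * g) a.1 := A_comm n _ hb a.1 a.2
    have hfix : g'⁻¹ * g * a.1 * (g'⁻¹ * g)⁻¹ = a.1 := by
      rw [hcomm.eq]; group
    calc g * a.1 * g⁻¹
        = g' * (g'⁻¹ * g * a.1 * (g'⁻¹ * g)⁻¹) * g'⁻¹ := by group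
      _ = g' * a.1 * g'⁻¹ := by rw [hfix]
  mul_mem' := by
    intro p q hp hq g g' a h
    obtain ⟨g2, hg2⟩ := QuotientGroup.mk_surjective (q.2 (QuotientGroup.mk g))
    have h1 := hq g g2 a hg2
    simp only [Prod.snd_mul, MulAut.mul_apply] at h
    have h2 := hp g2 g' (q.1 a) (by rw [h, hg2])
    show p.1 (q.1 (conjA n g a)) = conjA n g' (p.1 (q.1 a))
    rw [h1, h2]
  inv_mem' := by
    intro p hp g g' a h
    simp only [Prod.snd_inv] at h
    have h2 : (QuotientGroup.mk g : Wq n) = p.2 (QuotientGroup.mk g') := by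
      rw [h, MulAut.apply_inv_self]
    have h3 := hp g' g (p.1⁻¹ a) h2
    rw [MulAut.apply_inv_self] at h3
    show p.1⁻¹ (conjA n g a) = conjA n g' (p.1⁻¹ a)
    apply p.1.injective
    rw [MulAut.apply_inv_self, h3]

/-- An automorphism `f` of `A_n` is `W_n`-equivariant if `f(w̄ · a) = w̄ · f(a)`. -/
def IsEquivariant (n : ℕ) (f : MulAut ↥(A n)) : Prop :=
  ∀ (g : HW n) (a : ↥(A n)), f (conjA n g a) = conjA n g (f a)

/-- The group `Aut_W(A_n)` of `W_n`-equivariant automorphisms of `A_n`. -/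
def AutW (n : ℕ) : Subgroup (MulAut ↥(A n)) where
  carrier := {f | IsEquivariant n f}
  one_mem' := by intro g a; rfl
  mul_mem' := by
    intro f g hf hg w a
    exact (congrArg f (hg w a)).trans (hf w (g a))
  inv_mem' := by
    intro f hf g a
    apply f.injective
    rw [MulAut.apply_inv_self, hf g (f⁻¹ a), MulAut.apply_inv_self]

/-- The projection `Aut_S(A_n) → Aut(W_n)`, `(f, F) ↦ F`. -/
def projW (n : ℕ) : AutS n →* MulAut (Wq n) :=
  (MonoidHom.snd _ _).comp (AutS n).subtype

namespace HWaux

/-! ### Basic lemmas -/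

lemma x_sq_mem (n : ℕ) (i : Fin n) : x n i ^ 2 ∈ A n :=
  Subgroup.subset_closure ⟨i, rfl⟩

lemma xq_mul_self (n : ℕ) (i : Fin n) : xq n i * xq n i = 1 := by
  have h : (QuotientGroup.mk (x n i ^ 2) : Wq n) = 1 :=
    (QuotientGroup.eq_one_iff _).mpr (x_sq_mem n i)
  rw [pow_two, QuotientGroup.mk_mul] at h
  exact h

lemma xq_inv (n : ℕ) (i : Fin n) : (xq n i)⁻¹ = xq n i :=
  inv_eq_of_mul_eq_one_right (xq_mul_self n i)

lemma Wq_generated (n : ℕ) (K : Subgroup (Wq n)) (h : ∀ i, xq n i ∈ K) (w : Wq n) :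
    w ∈ K := by
  obtain ⟨g, rfl⟩ := QuotientGroup.mk_surjective w
  exact PresentedGroup.generated_by (HWrels n) (K.comap (QuotientGroup.mk' (A n))) h g

lemma lift_rels_eq_one (n : ℕ) {G : Type*} [Group G] {f : Fin n → G}
    (hf : ∀ i, f i * f i = 1) : ∀ r ∈ HWrels n, FreeGroup.lift f r = 1 := by
  rintro r ⟨i, j, hij, rfl⟩
  simp only [map_mul, map_inv, map_pow, FreeGroup.lift_apply_of]
  simp only [pow_two, hf j]
  group

lemma A_le_ker (n : ℕ) {G : Type*} [Group G] (φ : HW n →* G)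
    (h : ∀ i, φ (x n i) * φ (x n i) = 1) : ∀ a ∈ A n, φ a = 1 := by
  intro a ha
  refine Subgroup.closure_induction ?_ ?_ ?_ ?_ ha
  · rintro b ⟨i, rfl⟩
    rw [map_pow, pow_two, h i]
  · exact map_one φ
  · intro b c _ _ hb hc; rw [map_mul, hb, hc, one_mul]
  · intro b _ hb; rw [map_inv, hb, inv_one]

/-- Build a homomorphism out of `Wq n` from images of the generators that square to `1`. -/
def mkHom (n : ℕ) {G : Type*} [Group G] (f : Fin n → G) (hf : ∀ i, f i * f i = 1) :
    Wq n →* G :=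
  QuotientGroup.lift (A n) (PresentedGroup.toGroup (lift_rels_eq_one n hf))
    (A_le_ker n _ (by
      intro i
      simp only [show x n i = PresentedGroup.of i from rfl, PresentedGroup.toGroup.of]
      exact hf i))

lemma mkHom_xq (n : ℕ) {G : Type*} [Group G] (f : Fin n → G) (hf : ∀ i, f i * f i = 1)
    (i : Fin n) : mkHom n f hf (xq n i) = f i := by
  show (PresentedGroup.toGroup (lift_rels_eq_one n hf)) (PresentedGroup.of i) = f i
  rw [PresentedGroup.toGroup.of]

/-! ### The mod-2 abelianization of `Wq n` -/

lemma single_sq (n : ℕ) (i : Fin n) :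
    (Multiplicative.ofAdd (Pi.single i (1 : ZMod 2)) : Multiplicative (Fin n → ZMod 2)) *
      Multiplicative.ofAdd (Pi.single i (1 : ZMod 2)) = 1 := by
  rw [← ofAdd_add, ← Pi.single_add]
  have : (1 : ZMod 2) + 1 = 0 := by decide
  rw [this, Pi.single_zero, ofAdd_zero]

noncomputable def abW (n : ℕ) : Wq n →* Multiplicative (Fin n → ZMod 2) :=
  mkHom n (fun i => Multiplicative.ofAdd (Pi.single i 1)) (single_sq n)

lemma abW_xq (n : ℕ) (i : Fin n) :
    abW n (xq n i) = Multiplicative.ofAdd (Pi.single i 1) :=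
  mkHom_xq n _ _ i

lemma abW_xq_inj (n : ℕ) {k l : Fin n} (h : abW n (xq n k) = abW n (xq n l)) : k = l := by
  rw [abW_xq, abW_xq] at h
  have h' : (Pi.single k (1 : ZMod 2) : Fin n → ZMod 2) = Pi.single l 1 :=
    Multiplicative.ofAdd.injective h
  by_contra hkl
  have h1 := congrFun h' k
  rw [Pi.single_eq_same, Pi.single_eq_of_ne hkl] at h1
  exact one_ne_zero h1

lemma abW_conj (n : ℕ) (u z : Wq n) : abW n (u * z * u⁻¹) = abW n z := by
  rw [map_mul, map_mul, map_inv, mul_comm (abW n u), mul_assoc, mul_inv_cancel, mul_one]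

lemma conj_unique (n : ℕ) {k l : Fin n} {u v : Wq n}
    (h : u * xq n k * u⁻¹ = v * xq n l * v⁻¹) : k = l := by
  apply abW_xq_inj n
  have := congrArg (abW n) h
  rwa [abW_conj, abW_conj] at this

lemma xq_ne_one (n : ℕ) (k : Fin n) : xq n k ≠ 1 := by
  intro h
  have := congrArg (abW n) h
  rw [abW_xq, map_one] at this
  have h2 : (Pi.single k (1 : ZMod 2) : Fin n → ZMod 2) = 0 :=
    Multiplicative.ofAdd.injective this
  have h1 := congrFun h2 k
  rw [Pi.single_eq_same] at h1
  exact one_ne_zero h1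

/-! ### Normal form: action on reduced words -/

/-- Reduced words: lists of generators with no two adjacent letters equal. -/
def X (n : ℕ) : Type := {l : List (Fin n) // l.Chain' (· ≠ ·)}

/-- The toggle of the generator `i` on a word. -/
def togL (n : ℕ) (i : Fin n) : List (Fin n) → List (Fin n)
  | [] => [i]
  | j :: t => if j = i then t else i :: j :: t

lemma togL_chain (n : ℕ) (i : Fin n) :
    ∀ l : List (Fin n), l.Chain' (· ≠ ·) → (togL n i l).Chain' (· ≠ ·)
  | [], _ => by exact List.isChain_singleton i
  | j :: t, h => by
    by_cases hj : j = i
    · simp only [togL, if_pos hj]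
      exact h.tail
    · simp only [togL, if_neg hj]
      exact List.isChain_cons_cons.mpr ⟨Ne.symm hj, h⟩

lemma togL_togL (n : ℕ) (i : Fin n) :
    ∀ l : List (Fin n), l.Chain' (· ≠ ·) → togL n i (togL n i (l)) = l
  | [], _ => by simp [togL]
  | j :: t, h => by
    by_cases hj : j = i
    · subst hj
      simp only [togL, if_pos rfl]
      cases t with
      | nil => simp [togL]
      | cons k t' =>
        have hk : ¬ k = j := fun hh => (List.isChain_cons_cons.mp h).1 hh.symm
        simp [togL, hk]
    · simp [togL, hj]

lemma togL_cons (n : ℕ) (i : Fin n) (t : List (Fin n)) (h : (i :: t).Chain' (· ≠ ·)) :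
    togL n i t = i :: t := by
  cases t with
  | nil => simp [togL]
  | cons k t' =>
    have hk : ¬ k = i := fun hh => (List.isChain_cons_cons.mp h).1 hh.symm
    simp [togL, hk]

/-- The toggle action of the generator `i` on reduced words. -/
def toggle (n : ℕ) (i : Fin n) (l : X n) : X n :=
  ⟨togL n i l.1, togL_chain n i l.1 l.2⟩

lemma toggle_toggle (n : ℕ) (i : Fin n) (l : X n) : toggle n i (toggle n i l) = l :=
  Subtype.ext (togL_togL n i l.1 l.2)

/-- The toggle action as a permutation. -/
def tperm (n : ℕ) (i : Fin n) : Equiv.Perm (X n) :=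
  ⟨toggle n i, toggle n i, toggle_toggle n i, toggle_toggle n i⟩

lemma tperm_sq (n : ℕ) (i : Fin n) : tperm n i * tperm n i = 1 :=
  Equiv.ext fun l => toggle_toggle n i l

/-- The action of `Wq n` on reduced words. -/
noncomputable def theta (n : ℕ) : Wq n →* Equiv.Perm (X n) :=
  mkHom n (tperm n) (tperm_sq n)

lemma theta_xq (n : ℕ) (i : Fin n) : theta n (xq n i) = tperm n i :=
  mkHom_xq n _ _ i

/-- Multiply out a list of generators in `Wq n`. -/
def prodx (n : ℕ) (l : List (Fin n)) : Wq n := (l.map (xq n)).prod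

lemma prodx_nil (n : ℕ) : prodx n [] = 1 := rfl

lemma prodx_cons (n : ℕ) (i : Fin n) (l : List (Fin n)) :
    prodx n (i :: l) = xq n i * prodx n l := by
  simp [prodx]

lemma prodx_theta (n : ℕ) (w : Wq n) (l : X n) :
    prodx n ((theta n w l).1) = w * prodx n l.1 := by
  revert l
  let K : Subgroup (Wq n) :=
    { carrier := {w | ∀ l : X n, prodx n ((theta n w l).1) = w * prodx n l.1}
      one_mem' := by intro l; simp
      mul_mem' := by
        intro w v hw hv l
        have h1 : theta n (w * v) l = theta n w (theta n v l) := by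
          rw [map_mul]; rfl
        rw [h1, hw, hv, mul_assoc]
      inv_mem' := by
        intro w hw l
        have h2 := hw (theta n w⁻¹ l)
        have h3 : theta n w (theta n w⁻¹ l) = l := by
          rw [← Equiv.Perm.mul_apply, ← map_mul, mul_inv_cancel, map_one]; rfl
        rw [h3] at h2
        rw [eq_inv_mul_iff_mul_eq, ← h2] }
  intro l
  refine Wq_generated n K ?_ w l
  intro i l
  show prodx n ((theta n (xq n i) l).1) = xq n i * prodx n l.1
  rw [theta_xq]
  obtain ⟨l, hl⟩ := l
  show prodx n (togL n i l) = xq n i * prodx n l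
  cases l with
  | nil => simp [togL, prodx]
  | cons j t =>
    by_cases hj : j = i
    · subst hj
      rw [prodx_cons, ← mul_assoc, xq_mul_self, one_mul]
      simp [togL]
    · simp only [togL, if_neg hj]
      rw [prodx_cons]

lemma theta_prodx (n : ℕ) : ∀ (l : List (Fin n)) (h : l.Chain' (· ≠ ·)),
    theta n (prodx n l) ⟨[], List.isChain_nil⟩ = ⟨l, h⟩ := by
  intro l
  induction l with
  | nil => intro h; rw [prodx_nil, map_one]; rfl
  | cons i t ih =>
    intro h
    have ht : t.Chain' (· ≠ ·) := h.tail
    erw [prodx_cons, map_mul, Equiv.Perm.mul_apply, ih ht, theta_xq]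
    exact Subtype.ext (togL_cons n i t h)


lemma word_unique (n : ℕ) {l l' : List (Fin n)} (h : l.Chain' (· ≠ ·))
    (h' : l'.Chain' (· ≠ ·)) (heq : prodx n l = prodx n l') : l = l' := by
  have h1 := theta_prodx n l h
  have h2 := theta_prodx n l' h'
  rw [heq, h2] at h1
  exact congrArg Subtype.val h1.symm

lemma prodx_reverse (n : ℕ) (l : List (Fin n)) :
    prodx n l.reverse = (prodx n l)⁻¹ := by
  induction l with
  | nil => simp [prodx]
  | cons i t ih =>
    rw [List.reverse_cons, prodx_cons]
    show (List.map (xq n) (t.reverse ++ [i])).prod = _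
    rw [List.map_append, List.prod_append]
    show prodx n t.reverse * prodx n [i] = _
    rw [ih, mul_inv_rev, xq_inv]
    simp [prodx]

lemma palindrome_conj (n : ℕ) : ∀ (L : List (Fin n)), L.Palindrome →
    L.Chain' (· ≠ ·) → L ≠ [] → ∃ (u : Wq n) (k : Fin n), prodx n L = u * xq n k * u⁻¹ := by
  intro L pal
  induction pal with
  | nil => intro _ hne; exact absurd rfl hne
  | singleton a =>
    intro _ _
    exact ⟨1, a, by simp [prodx]⟩
  | cons_concat a pal ih =>
    rename_i l
    intro hch _
    rcases eq_or_ne l List.nil with rfl | hl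
    · exfalso
      rw [List.nil_append] at hch
      exact (List.isChain_cons_cons.mp hch).1 rfl
    · have hch' : l.Chain' (· ≠ ·) := hch.tail.left_of_append
      obtain ⟨u, k, hk⟩ := ih hch' hl
      refine ⟨xq n a * u, k, ?_⟩
      have h1 : prodx n (a :: (l ++ [a])) = xq n a * (prodx n l * xq n a) := by
        rw [prodx_cons]
        show _ * (List.map (xq n) (l ++ [a])).prod = _
        rw [List.map_append, List.prod_append]
        show xq n a * (prodx n l * prodx n [a]) = _
        simp [prodx]
      rw [h1, hk, mul_inv_rev, xq_inv]
      group

lemma word_of (n : ℕ) (w : Wq n) :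
    ∃ l : List (Fin n), l.Chain' (· ≠ ·) ∧ prodx n l = w := by
  refine ⟨(theta n w ⟨[], List.isChain_nil⟩).1, (theta n w ⟨[], List.isChain_nil⟩).2, ?_⟩
  erw [prodx_theta]
  simp [prodx]

lemma exists_conj_xq (n : ℕ) {w : Wq n} (h2 : w * w = 1) (h1 : w ≠ 1) :
    ∃ (u : Wq n) (k : Fin n), w = u * xq n k * u⁻¹ := by
  obtain ⟨l, hch, hw⟩ := word_of n w
  have hlne : l ≠ [] := by
    rintro rfl
    rw [prodx_nil] at hw
    exact h1 hw.symm
  have hwinv : w⁻¹ = w := inv_eq_of_mul_eq_one_right h2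
  have hchrev : l.reverse.Chain' (· ≠ ·) := by
    change List.IsChain _ l.reverse
    rw [List.isChain_reverse]
    exact List.IsChain.imp (fun a b hab => Ne.symm hab) hch
  have hrev : l.reverse = l := by
    apply word_unique n hchrev hch
    rw [prodx_reverse, hw, hwinv]
  obtain ⟨u, k, hk⟩ := palindrome_conj n l (List.Palindrome.of_reverse_eq hrev) hch hlne
  exact ⟨u, k, by rw [← hw, hk]⟩

/-! ### The conjugation representation of `Wq n` on `A n` -/

/-- Conjugation by `g` as a monoid endomorphism of `A n`. -/
def conjEnd (n : ℕ) (g : HW n) : Monoid.End ↥(A n) where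
  toFun := conjA n g
  map_one' := by
    apply Subtype.ext
    show g * ((1 : ↥(A n)) : HW n) * g⁻¹ = ((1 : ↥(A n)) : HW n)
    rw [OneMemClass.coe_one]
    group
  map_mul' := fun a b => by
    apply Subtype.ext
    show g * ((a * b : ↥(A n)) : HW n) * g⁻¹ = (g * ↑a * g⁻¹) * (g * ↑b * g⁻¹)
    rw [show ((a * b : ↥(A n)) : HW n) = ↑a * ↑b from rfl]
    group

def rho (n : ℕ) : HW n →* Monoid.End ↥(A n) where
  toFun := conjEnd n
  map_one' := MonoidHom.ext fun a => Subtype.ext (by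
    show (1 : HW n) * ↑a * (1 : HW n)⁻¹ = (a : HW n)
    group)
  map_mul' := fun g h => MonoidHom.ext fun a => Subtype.ext (by
    show (g * h) * ↑a * (g * h)⁻¹ = g * (h * ↑a * h⁻¹) * g⁻¹
    group)

def rhoW (n : ℕ) : Wq n →* Monoid.End ↥(A n) :=
  QuotientGroup.lift (A n) (rho n) (by
    intro a ha
    refine MonoidHom.ext fun b => Subtype.ext ?_
    show a * ↑b * a⁻¹ = (b : HW n)
    rw [(A_comm n a ha b.1 b.2).eq, mul_inv_cancel_right])

lemma rhoW_mk (n : ℕ) (g : HW n) : rhoW n (QuotientGroup.mk g) = rho n g := rfl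

lemma conjA_congr (n : ℕ) {g g' : HW n}
    (h : (QuotientGroup.mk g : Wq n) = QuotientGroup.mk g') (a : ↥(A n)) :
    conjA n g a = conjA n g' a := by
  have hr : rho n g = rho n g' := by rw [← rhoW_mk, ← rhoW_mk, h]
  exact DFunLike.congr_fun hr a

lemma A_induction (n : ℕ) (P : ↥(A n) → Prop) (hx : ∀ i, P (xsq n i)) (h1 : P 1)
    (hmul : ∀ a b, P a → P b → P (a * b)) (hinv : ∀ a, P a → P a⁻¹) (a : ↥(A n)) : P a := by
  obtain ⟨g, hg⟩ := a
  refine Subgroup.closure_induction (p := fun g hg => P ⟨g, hg⟩) ?_ ?_ ?_ ?_ hg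
  · rintro b ⟨i, rfl⟩
    exact hx i
  · exact h1
  · intro b c hb hc pb pc
    exact hmul ⟨b, hb⟩ ⟨c, hc⟩ pb pc
  · intro b hb pb
    exact hinv ⟨b, hb⟩ pb

lemma End_ext_A (n : ℕ) {φ ψ : Monoid.End ↥(A n)} (h : ∀ i, φ (xsq n i) = ψ (xsq n i)) :
    φ = ψ := by
  apply MonoidHom.ext
  refine A_induction n (fun a => φ a = ψ a) h ?_ ?_ ?_
  · show φ 1 = ψ 1
    rw [map_one, map_one]
  · intro a b ha hb
    show φ (a * b) = ψ (a * b)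
    rw [map_mul, map_mul, ha, hb]
  · intro a ha
    show φ a⁻¹ = ψ a⁻¹
    rw [map_inv, map_inv, ha]

lemma conj_x_sq (n : ℕ) (i j : Fin n) :
    x n i * x n j ^ 2 * (x n i)⁻¹ = if i = j then x n j ^ 2 else (x n j ^ 2)⁻¹ := by
  by_cases h : i = j
  · subst h; rw [if_pos rfl]; group
  · rw [if_neg h]
    have e2 : (x n i)⁻¹ * x n j ^ 2 * x n i = (x n j ^ 2)⁻¹ :=
      mul_eq_one_iff_eq_inv.mp (HW.relation n h)
    have h3 : x n j ^ 2 = x n i * (x n j ^ 2)⁻¹ * (x n i)⁻¹ := by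
      rw [← e2]; group
    calc x n i * x n j ^ 2 * (x n i)⁻¹
        = (x n i * (x n j ^ 2)⁻¹ * (x n i)⁻¹)⁻¹ := by group
      _ = (x n j ^ 2)⁻¹ := by rw [← h3]

lemma rho_x_xsq (n : ℕ) (i j : Fin n) :
    rho n (x n i) (xsq n j) = if i = j then xsq n j else (xsq n j)⁻¹ := by
  by_cases h : i = j
  · rw [if_pos h]
    apply Subtype.ext
    show x n i * x n j ^ 2 * (x n i)⁻¹ = x n j ^ 2
    rw [conj_x_sq, if_pos h]
  · rw [if_neg h]
    apply Subtype.ext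
    show x n i * x n j ^ 2 * (x n i)⁻¹ = ((xsq n j)⁻¹ : ↥(A n))
    rw [conj_x_sq, if_neg h]
    rfl

lemma End_mul_apply (n : ℕ) (φ ψ : Monoid.End ↥(A n)) (a : ↥(A n)) :
    (φ * ψ) a = φ (ψ a) := rfl

lemma rho_x_comm (n : ℕ) (i j : Fin n) :
    rho n (x n i) * rho n (x n j) = rho n (x n j) * rho n (x n i) := by
  apply End_ext_A n
  intro k
  rw [End_mul_apply, End_mul_apply]
  by_cases hjk : j = k <;> by_cases hik : i = k <;>
    simp [rho_x_xsq, hjk, hik]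

lemma comm_of_inv {M : Type*} [Monoid M] {a b c : M} (h1 : a * b = 1) (h2 : b * a = 1)
    (h : c * a = a * c) : c * b = b * c := by
  calc c * b = b * a * (c * b) := by rw [h2, one_mul]
    _ = b * (a * c * b) := by rw [mul_assoc b a (c * b), ← mul_assoc a c b]
    _ = b * (c * a * b) := by rw [h]
    _ = b * (c * (a * b)) := by rw [mul_assoc c a b]
    _ = b * c := by rw [h1, mul_one]

lemma rhoW_comm (n : ℕ) : ∀ u w : Wq n, rhoW n u * rhoW n w = rhoW n w * rhoW n u := by
  have base : ∀ i : Fin n, ∀ w : Wq n,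
      rhoW n (xq n i) * rhoW n w = rhoW n w * rhoW n (xq n i) := by
    intro i
    let K : Subgroup (Wq n) :=
      { carrier := {w | rhoW n (xq n i) * rhoW n w = rhoW n w * rhoW n (xq n i)}
        one_mem' := by simp
        mul_mem' := by
          intro a b ha hb
          show rhoW n (xq n i) * rhoW n (a * b) = rhoW n (a * b) * rhoW n (xq n i)
          rw [map_mul, ← mul_assoc, ha, mul_assoc, hb, ← mul_assoc]
        inv_mem' := by
          intro a ha
          show rhoW n (xq n i) * rhoW n a⁻¹ = rhoW n a⁻¹ * rhoW n (xq n i)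
          have h1 : rhoW n a * rhoW n a⁻¹ = 1 := by
            rw [← map_mul, mul_inv_cancel, map_one]
          have h2 : rhoW n a⁻¹ * rhoW n a = 1 := by
            rw [← map_mul, inv_mul_cancel, map_one]
          exact comm_of_inv h1 h2 ha }
    intro w
    refine Wq_generated n K ?_ w
    intro j
    show rhoW n (xq n i) * rhoW n (xq n j) = rhoW n (xq n j) * rhoW n (xq n i)
    exact rho_x_comm n i j
  intro u
  let K : Subgroup (Wq n) :=
    { carrier := {u | ∀ w, rhoW n u * rhoW n w = rhoW n w * rhoW n u}
      one_mem' := by simp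
      mul_mem' := by
        intro a b ha hb w
        show rhoW n (a * b) * rhoW n w = rhoW n w * rhoW n (a * b)
        rw [map_mul, mul_assoc, hb, ← mul_assoc, ha, mul_assoc]
      inv_mem' := by
        intro a ha w
        show rhoW n a⁻¹ * rhoW n w = rhoW n w * rhoW n a⁻¹
        have h1 : rhoW n a * rhoW n a⁻¹ = 1 := by
          rw [← map_mul, mul_inv_cancel, map_one]
        have h2 : rhoW n a⁻¹ * rhoW n a = 1 := by
          rw [← map_mul, inv_mul_cancel, map_one]
        exact (comm_of_inv h1 h2 (ha w).symm).symm }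
  exact Wq_generated n K base u

lemma rhoW_conj (n : ℕ) (u z : Wq n) : rhoW n (u * z * u⁻¹) = rhoW n z := by
  rw [map_mul, map_mul, rhoW_comm n u z, mul_assoc, ← map_mul, mul_inv_cancel, map_one, mul_one]

/-! ### Permutation automorphisms of `HW n` -/

def permHW (n : ℕ) (e : Equiv.Perm (Fin n)) : HW n →* HW n :=
  PresentedGroup.toGroup (f := fun i => x n (e i)) (by
    rintro r ⟨i, j, hij, rfl⟩
    simp only [map_mul, map_inv, map_pow, FreeGroup.lift_apply_of]
    exact HW.relation n fun h => hij (e.injective h))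

lemma permHW_x (n : ℕ) (e : Equiv.Perm (Fin n)) (i : Fin n) :
    permHW n e (x n i) = x n (e i) :=
  PresentedGroup.toGroup.of _

lemma permHW_comp (n : ℕ) (e e' : Equiv.Perm (Fin n)) :
    (permHW n e').comp (permHW n e) = permHW n (e.trans e') := by
  apply PresentedGroup.ext
  intro i
  show permHW n e' (permHW n e (x n i)) = permHW n (e.trans e') (x n i)
  rw [permHW_x, permHW_x, permHW_x]
  rfl

lemma permHW_id (n : ℕ) : permHW n (Equiv.refl _) = MonoidHom.id _ := by
  apply PresentedGroup.ext
  intro i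
  show permHW n (Equiv.refl _) (x n i) = x n i
  rw [permHW_x]
  rfl

lemma permHW_mem_A (n : ℕ) (e : Equiv.Perm (Fin n)) {a : HW n} (ha : a ∈ A n) :
    permHW n e a ∈ A n := by
  refine Subgroup.closure_induction ?_ ?_ ?_ ?_ ha
  · rintro b ⟨i, rfl⟩
    rw [map_pow, permHW_x]
    exact x_sq_mem n (e i)
  · rw [map_one]; exact one_mem _
  · intro b c _ _ hb hc; rw [map_mul]; exact mul_mem hb hc
  · intro b _ hb; rw [map_inv]; exact inv_mem hb

def permA (n : ℕ) (e : Equiv.Perm (Fin n)) : MulAut ↥(A n) where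
  toFun := fun a => ⟨permHW n e a, permHW_mem_A n e a.2⟩
  invFun := fun a => ⟨permHW n e.symm a, permHW_mem_A n e.symm a.2⟩
  left_inv := fun a => Subtype.ext (by
    have h : (permHW n e.symm).comp (permHW n e) = MonoidHom.id _ := by
      rw [permHW_comp, Equiv.self_trans_symm, permHW_id]
    exact DFunLike.congr_fun h (a : HW n))
  right_inv := fun a => Subtype.ext (by
    have h : (permHW n e).comp (permHW n e.symm) = MonoidHom.id _ := by
      rw [permHW_comp, Equiv.symm_trans_self, permHW_id]
    exact DFunLike.congr_fun h (a : HW n))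
  map_mul' := fun a b => Subtype.ext (by
    show permHW n e (↑a * ↑b) = permHW n e ↑a * permHW n e ↑b
    exact map_mul _ _ _)

lemma permA_mul (n : ℕ) (e e' : Equiv.Perm (Fin n)) :
    permA n (e.trans e') = permA n e' * permA n e := by
  refine MulEquiv.ext fun a => Subtype.ext ?_
  show permHW n (e.trans e') ↑a = permHW n e' (permHW n e ↑a)
  exact (DFunLike.congr_fun (permHW_comp n e e') (↑a : HW n)).symm

lemma permA_one (n : ℕ) : permA n (Equiv.refl _) = 1 := by
  refine MulEquiv.ext fun a => Subtype.ext ?_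
  show permHW n (Equiv.refl _) ↑a = ↑a
  rw [permHW_id]
  rfl

def permWq (n : ℕ) (e : Equiv.Perm (Fin n)) : Wq n →* Wq n :=
  QuotientGroup.lift (A n) ((QuotientGroup.mk' (A n)).comp (permHW n e)) (by
    intro a ha
    show (QuotientGroup.mk (permHW n e a) : Wq n) = 1
    rw [QuotientGroup.eq_one_iff]
    exact permHW_mem_A n e ha)

lemma permWq_mk (n : ℕ) (e : Equiv.Perm (Fin n)) (g : HW n) :
    permWq n e (QuotientGroup.mk g) = QuotientGroup.mk (permHW n e g) := rfl

lemma permWq_xq (n : ℕ) (e : Equiv.Perm (Fin n)) (i : Fin n) :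
    permWq n e (xq n i) = xq n (e i) := by
  show (QuotientGroup.mk (permHW n e (x n i)) : Wq n) = _
  rw [permHW_x]
  rfl

/-! ### The permutation of generators induced by an automorphism of `Wq n` -/

lemma exists_conj_F (n : ℕ) (F : MulAut (Wq n)) (k : Fin n) :
    ∃ (m : Fin n) (u : Wq n), F (xq n k) = u * xq n m * u⁻¹ := by
  have h2 : F (xq n k) * F (xq n k) = 1 := by rw [← map_mul, xq_mul_self, map_one]
  have h1 : F (xq n k) ≠ 1 := by
    intro h
    refine xq_ne_one n k ?_
    have := congrArg F.symm h
    rwa [MulEquiv.symm_apply_apply, map_one] at this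
  obtain ⟨u, m, hm⟩ := exists_conj_xq n h2 h1
  exact ⟨m, u, hm⟩

noncomputable def sigma (n : ℕ) (F : MulAut (Wq n)) (k : Fin n) : Fin n :=
  (exists_conj_F n F k).choose

lemma sigma_spec (n : ℕ) (F : MulAut (Wq n)) (k : Fin n) :
    ∃ u : Wq n, F (xq n k) = u * xq n (sigma n F k) * u⁻¹ :=
  (exists_conj_F n F k).choose_spec

lemma sigma_unique (n : ℕ) (F : MulAut (Wq n)) (k : Fin n) {m : Fin n} {v : Wq n}
    (h : F (xq n k) = v * xq n m * v⁻¹) : sigma n F k = m := by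
  obtain ⟨u, hu⟩ := sigma_spec n F k
  exact conj_unique n (hu.symm.trans h)

lemma sigma_one (n : ℕ) (k : Fin n) : sigma n 1 k = k :=
  sigma_unique n 1 k (v := 1) (by simp)

lemma sigma_mul (n : ℕ) (F G : MulAut (Wq n)) (k : Fin n) :
    sigma n (F * G) k = sigma n F (sigma n G k) := by
  obtain ⟨u, hu⟩ := sigma_spec n G k
  obtain ⟨v, hv⟩ := sigma_spec n F (sigma n G k)
  apply sigma_unique n (F * G) k (v := F u * v)
  show F (G (xq n k)) = _
  rw [hu, map_mul, map_mul, map_inv, hv]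
  group

lemma sigma_injective (n : ℕ) (F : MulAut (Wq n)) : Function.Injective (sigma n F) := by
  intro k k' h
  obtain ⟨u, hu⟩ := sigma_spec n F k
  obtain ⟨v, hv⟩ := sigma_spec n F k'
  rw [h] at hu
  apply abW_xq_inj n
  have h1 : xq n k = F.symm (u * xq n (sigma n F k') * u⁻¹) := by
    rw [← hu, MulEquiv.symm_apply_apply]
  have h2 : xq n k' = F.symm (v * xq n (sigma n F k') * v⁻¹) := by
    rw [← hv, MulEquiv.symm_apply_apply]
  have h3 : F.symm (u * xq n (sigma n F k') * u⁻¹)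
      = F.symm u * F.symm (xq n (sigma n F k')) * (F.symm u)⁻¹ := by
    rw [map_mul, map_mul, map_inv]
  have h4 : F.symm (v * xq n (sigma n F k') * v⁻¹)
      = F.symm v * F.symm (xq n (sigma n F k')) * (F.symm v)⁻¹ := by
    rw [map_mul, map_mul, map_inv]
  rw [h1, h2, h3, h4, abW_conj, abW_conj]

noncomputable def ePerm (n : ℕ) (F : MulAut (Wq n)) : Equiv.Perm (Fin n) :=
  Equiv.ofBijective (sigma n F) ((Finite.injective_iff_bijective).mp (sigma_injective n F))

lemma ePerm_apply (n : ℕ) (F : MulAut (Wq n)) (k : Fin n) : ePerm n F k = sigma n F k := rfl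

lemma rhoW_permWq (n : ℕ) (F : MulAut (Wq n)) (w : Wq n) :
    rhoW n (permWq n (ePerm n F) w) = rhoW n (F w) := by
  let K : Subgroup (Wq n) :=
    { carrier := {w | rhoW n (permWq n (ePerm n F) w) = rhoW n (F w)}
      one_mem' := by simp
      mul_mem' := by
        intro a b ha hb
        show rhoW n (permWq n (ePerm n F) (a * b)) = rhoW n (F (a * b))
        rw [map_mul, map_mul, map_mul, map_mul, ha, hb]
      inv_mem' := by
        intro a ha
        show rhoW n (permWq n (ePerm n F) a⁻¹) = rhoW n (F a⁻¹)
        have h1 : rhoW n (permWq n (ePerm n F) a⁻¹) * rhoW n (F a) = 1 := by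
          rw [← ha, ← map_mul, ← map_mul, inv_mul_cancel, map_one, map_one]
        have h2 : rhoW n (F a) * rhoW n (F a⁻¹) = 1 := by
          rw [← map_mul, ← map_mul, mul_inv_cancel, map_one, map_one]
        exact left_inv_eq_right_inv h1 h2 }
  refine Wq_generated n K ?_ w
  intro k
  show rhoW n (permWq n (ePerm n F) (xq n k)) = rhoW n (F (xq n k))
  rw [permWq_xq]
  obtain ⟨u, hu⟩ := sigma_spec n F k
  rw [hu, rhoW_conj]
  rfl

lemma isSemilinear_sec (n : ℕ) (F : MulAut (Wq n)) :
    IsSemilinear n (permA n (ePerm n F), F) := by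
  intro g g' a h
  apply Subtype.ext
  show permHW n (ePerm n F) (g * ↑a * g⁻¹)
      = g' * (permHW n (ePerm n F) ↑a) * g'⁻¹
  have hmem : permHW n (ePerm n F) ↑a ∈ A n := permHW_mem_A n _ a.2
  have hr : rho n (permHW n (ePerm n F) g) = rho n g' := by
    have h1 : rhoW n (QuotientGroup.mk (permHW n (ePerm n F) g))
        = rhoW n (QuotientGroup.mk g') := by
      rw [← permWq_mk, rhoW_permWq]
      exact congrArg (rhoW n) h.symm
    exact h1
  have h2 := DFunLike.congr_fun hr (⟨permHW n (ePerm n F) ↑a, hmem⟩ : ↥(A n))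
  have h3 := congrArg Subtype.val h2
  rw [map_mul, map_mul, map_inv]
  exact h3

noncomputable def sec (n : ℕ) (F : MulAut (Wq n)) : AutS n :=
  ⟨(permA n (ePerm n F), F), isSemilinear_sec n F⟩

noncomputable def secHom (n : ℕ) : MulAut (Wq n) →* AutS n where
  toFun := sec n
  map_one' := by
    apply Subtype.ext
    apply Prod.ext
    · show permA n (ePerm n 1) = 1
      have he : ePerm n 1 = Equiv.refl (Fin n) := Equiv.ext fun k => sigma_one n k
      rw [he, permA_one]
    · rfl
  map_mul' := fun F G => by
    apply Subtype.ext
    apply Prod.ext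
    · show permA n (ePerm n (F * G)) = permA n (ePerm n F) * permA n (ePerm n G)
      have he : ePerm n (F * G) = (ePerm n G).trans (ePerm n F) :=
        Equiv.ext fun k => sigma_mul n F G k
      rw [he, permA_mul]
    · rfl

lemma isSemilinear_of_equivariant (n : ℕ) {f : MulAut ↥(A n)} (hf : f ∈ AutW n) :
    IsSemilinear n (f, (1 : MulAut (Wq n))) := by
  intro g g' a h
  have h' : (QuotientGroup.mk g' : Wq n) = QuotientGroup.mk g := h
  show f (conjA n g a) = conjA n g' (f a)
  rw [hf g a]
  exact conjA_congr n h'.symm (f a)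

def kerIso (n : ℕ) : ((projW n).ker) ≃* AutW n where
  toFun := fun q => ⟨(q.1 : MulAut ↥(A n) × MulAut (Wq n)).1, by
    intro g a
    refine q.1.2 g g a ?_
    have h2 : ((q.1 : MulAut ↥(A n) × MulAut (Wq n))).2 = 1 := MonoidHom.mem_ker.mp q.2
    rw [h2]
    rfl⟩
  invFun := fun f => ⟨⟨((f : MulAut ↥(A n)), 1), isSemilinear_of_equivariant n f.2⟩,
    MonoidHom.mem_ker.mpr rfl⟩
  left_inv := fun q => by
    apply Subtype.ext
    apply Subtype.ext
    apply Prod.ext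
    · rfl
    · exact (MonoidHom.mem_ker.mp q.2).symm
  right_inv := fun f => Subtype.ext rfl
  map_mul' := fun q q' => Subtype.ext rfl

end HWaux

/-- Corollary `splits`, first sequence: the projection
`Aut_S(A_n) → Aut(W_n)` is surjective, has kernel `{(f, id) : f ∈ Aut_W(A_n)} ≅ Aut_W(A_n)`,
and admits a group-theoretic section; i.e. `1 → Aut_W(A_n) → Aut_S(A_n) → Aut(W_n) → 1`
is a split short exact sequence. -/
theorem stmt16 (n : ℕ) :
    Function.Surjective (projW n) ∧
    (∀ p : AutS n, p ∈ (projW n).ker ↔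
      ((p : MulAut ↥(A n) × MulAut (Wq n)).2 = 1 ∧
        (p : MulAut ↥(A n) × MulAut (Wq n)).1 ∈ AutW n)) ∧
    Nonempty ((projW n).ker ≃* AutW n) ∧
    ∃ s : MulAut (Wq n) →* AutS n, (projW n).comp s = MonoidHom.id _ := by
  refine ⟨?_, ?_, ⟨HWaux.kerIso n⟩, HWaux.secHom n, MonoidHom.ext fun F => rfl⟩
  · intro F
    exact ⟨HWaux.secHom n F, rfl⟩
  · intro p
    constructor
    · intro hp
      have h2 : (p : MulAut ↥(A n) × MulAut (Wq n)).2 = 1 := MonoidHom.mem_ker.mp hp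
      refine ⟨h2, ?_⟩
      intro g a
      refine p.2 g g a ?_
      rw [h2]
      rfl
    · rintro ⟨h2, -⟩
      exact MonoidHom.mem_ker.mpr h2
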